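/- The function g(x) := − log(Q(x)) is convex on ℝ. -/

import Mathlib

/-- The standard Gaussian upper-tail function `Q(x) = ∫_x^∞ (1/√(2π)) e^{−t²/2} dt`. -/
noncomputable def gaussQ (x : ℝ) : ℝ :=
  ∫ t in Set.Ici x, (Real.sqrt (2 * Real.pi))⁻¹ * Real.exp (-t ^ 2 / 2)

open Real MeasureTheory Set Filter intervalIntegral

noncomputable def gaussPhi (t : ℝ) : ℝ := (Real.sqrt (2 * Real.pi))⁻¹ * Real.exp (-t ^ 2 / 2)

lemma gaussPhi_pos (t : ℝ) : 0 < gaussPhi t :=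
  mul_pos (inv_pos.2 (Real.sqrt_pos.2 (by positivity))) (Real.exp_pos _)

lemma continuous_gaussPhi : Continuous gaussPhi := by
  unfold gaussPhi; fun_prop

lemma integrable_gaussPhi : Integrable gaussPhi := by
  have h := (integrable_exp_neg_mul_sq (by norm_num : (0:ℝ) < 1/2)).const_mul
    (Real.sqrt (2 * Real.pi))⁻¹
  have : gaussPhi = fun t : ℝ => (Real.sqrt (2 * Real.pi))⁻¹ * Real.exp (-(1/2) * t ^ 2) := by
    funext t; unfold gaussPhi; ring_nf
  rw [this]; exact h

lemma gaussQ_def (x : ℝ) : gaussQ x = ∫ t in Set.Ici x, gaussPhi t := rfl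

lemma gaussQ_pos (x : ℝ) : 0 < gaussQ x := by
  have h1 : (0:ℝ) < ∫ t in x..(x+1), gaussPhi t :=
    intervalIntegral_pos_of_pos_on (continuous_gaussPhi.intervalIntegrable _ _)
      (fun t _ => gaussPhi_pos t) (by linarith)
  have h2 : (∫ t in x..(x+1), gaussPhi t) = ∫ t in Set.Ioc x (x+1), gaussPhi t :=
    intervalIntegral.integral_of_le (by linarith)
  calc (0:ℝ) < ∫ t in x..(x+1), gaussPhi t := h1
    _ ≤ gaussQ x := by
      rw [h2, gaussQ_def]
      refine setIntegral_mono_set integrable_gaussPhi.integrableOn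
        (Eventually.of_forall fun t => (gaussPhi_pos t).le) ?_
      exact (Ioc_subset_Icc_self.trans Icc_subset_Ici_self).eventuallyLE

lemma gaussQ_eq (x : ℝ) : gaussQ x = gaussQ 0 - ∫ t in (0:ℝ)..x, gaussPhi t := by
  have key : ∀ a : ℝ, gaussQ a = (∫ t, gaussPhi t) - ∫ t in Set.Iic a, gaussPhi t := by
    intro a
    rw [gaussQ_def, integral_Ici_eq_integral_Ioi,
      ← integral_Iic_add_Ioi integrable_gaussPhi.integrableOn
        integrable_gaussPhi.integrableOn]
    ring
  rw [key x, key 0,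
    ← integral_Iic_sub_Iic integrable_gaussPhi.integrableOn integrable_gaussPhi.integrableOn]
  ring

lemma hasDerivAt_gaussQ (x : ℝ) : HasDerivAt gaussQ (-gaussPhi x) x := by
  have : HasDerivAt (fun y => gaussQ 0 - ∫ t in (0:ℝ)..y, gaussPhi t) (-gaussPhi x) x := by
    have h := intervalIntegral.integral_hasDerivAt_right
      (continuous_gaussPhi.intervalIntegrable 0 x)
      (continuous_gaussPhi.stronglyMeasurableAtFilter _ _)
      continuous_gaussPhi.continuousAt
    simpa using (h.const_sub (gaussQ 0))
  have hfun : (fun y => gaussQ 0 - ∫ t in (0:ℝ)..y, gaussPhi t) = gaussQ := by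
    funext y; rw [gaussQ_eq y]
  rwa [hfun] at this

lemma hasDerivAt_gaussPhi (x : ℝ) : HasDerivAt gaussPhi (-x * gaussPhi x) x := by
  have h1 : HasDerivAt (fun t : ℝ => -t ^ 2 / 2) (-x) x := by
    have := ((hasDerivAt_pow 2 x).neg).div_const 2
    simpa using this.congr_deriv (by ring)
  have h2 := (h1.exp).const_mul (Real.sqrt (2 * Real.pi))⁻¹
  unfold gaussPhi
  exact h2.congr_deriv (by ring)

lemma gauss_tail_ineq (x : ℝ) : x * gaussQ x ≤ gaussPhi x := by
  rcases le_or_gt x 0 with hx | hx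
  · exact (mul_nonpos_of_nonpos_of_nonneg hx (gaussQ_pos x).le).trans (gaussPhi_pos x).le
  · -- ∫_{Ioi x} t φ t = φ x
    have hderiv : ∀ t ∈ Set.Ioi x, HasDerivAt (fun t => -gaussPhi t) (t * gaussPhi t) t := by
      intro t _
      exact ((hasDerivAt_gaussPhi t).neg).congr_deriv (by ring)
    have htend : Tendsto (fun t => -gaussPhi t) atTop (nhds 0) := by
      have : Tendsto (fun t : ℝ => -t ^ 2 / 2) atTop atBot := by
        apply Filter.Tendsto.atBot_div_const (by norm_num)
        exact tendsto_neg_atTop_atBot.comp (tendsto_pow_atTop two_ne_zero)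
      have h2 := Real.tendsto_exp_atBot.comp this
      have := ((h2.const_mul (Real.sqrt (2 * Real.pi))⁻¹).neg)
      simpa [gaussPhi] using this
    have hint : (∫ t in Set.Ioi x, t * gaussPhi t) = gaussPhi x := by
      have := integral_Ioi_of_hasDerivAt_of_nonneg
        ((continuous_gaussPhi.neg).continuousWithinAt)
        hderiv
        (fun t ht => mul_nonneg (le_of_lt (hx.trans ht)) (gaussPhi_pos t).le)
        htend
      simpa using this
    have hmono : x * gaussQ x = ∫ t in Set.Ioi x, x * gaussPhi t := by
      rw [gaussQ_def, integral_Ici_eq_integral_Ioi, MeasureTheory.integral_const_mul]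
    rw [hmono, ← hint]
    apply setIntegral_mono_on
    · exact (integrable_gaussPhi.integrableOn).const_mul x
    · -- integrability of t * gaussPhi t on Ioi x
      have h := (integrable_mul_exp_neg_mul_sq (by norm_num : (0:ℝ) < 1/2)).const_mul
        (Real.sqrt (2 * Real.pi))⁻¹
      have heq : (fun t : ℝ => (Real.sqrt (2 * Real.pi))⁻¹ * (t * Real.exp (-(1/2) * t ^ 2)))
          = fun t => t * gaussPhi t := by
        funext t; unfold gaussPhi; ring_nf
      rw [heq] at h
      exact h.integrableOn
    · exact measurableSet_Ioi
    · intro t ht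
      exact mul_le_mul_of_nonneg_right (le_of_lt ht) (gaussPhi_pos t).le

lemma hasDerivAt_ratio (x : ℝ) :
    HasDerivAt (fun y => gaussPhi y / gaussQ y)
      ((-x * gaussPhi x * gaussQ x - gaussPhi x * -gaussPhi x) / gaussQ x ^ 2) x :=
  (hasDerivAt_gaussPhi x).div (hasDerivAt_gaussQ x) (gaussQ_pos x).ne'

lemma monotone_ratio : Monotone fun x => gaussPhi x / gaussQ x := by
  apply monotone_of_deriv_nonneg
  · exact fun x => (hasDerivAt_ratio x).differentiableAt
  · intro x
    rw [(hasDerivAt_ratio x).deriv]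
    have h1 : -x * gaussPhi x * gaussQ x - gaussPhi x * -gaussPhi x
        = gaussPhi x * (gaussPhi x - x * gaussQ x) := by ring
    rw [h1]
    apply div_nonneg _ (sq_nonneg _)
    exact mul_nonneg (gaussPhi_pos x).le (sub_nonneg.2 (gauss_tail_ineq x))

lemma hasDerivAt_negLogQ (x : ℝ) :
    HasDerivAt (fun y : ℝ => -Real.log (gaussQ y)) (gaussPhi x / gaussQ x) x := by
  have h := ((hasDerivAt_gaussQ x).log (gaussQ_pos x).ne').neg
  exact h.congr_deriv (by ring)

theorem neg_log_Q_convex :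
    ConvexOn ℝ Set.univ fun x : ℝ => -Real.log (gaussQ x) := by
  apply Monotone.convexOn_univ_of_deriv
  · exact fun x => (hasDerivAt_negLogQ x).differentiableAt
  · have : deriv (fun x : ℝ => -Real.log (gaussQ x)) = fun x => gaussPhi x / gaussQ x := by
      funext x; exact (hasDerivAt_negLogQ x).deriv
    rw [this]
    exact monotone_ratio
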